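/- Let T(G) be the generic tree added by Q_{κ,δ} (κ 2-Mahlo, δ < κ regular). For every condition ⟨t, f⃗⟩ ∈ Q_{κ,δ} and every α with ht(t) ≤ α < κ, there is an extension ⟨t', f⃗'⟩ ≤ ⟨t, f⃗⟩ with ht(t') > α; i.e., the set of conditions of height > α is dense, so T(G) has height κ. -/

import Mathlib

universe u

/-- A node of the binary tree `2^{<κ}`: a binary sequence of some ordinal length. -/
def BNode : Type (u + 1) :=
  Σ β : Ordinal.{u}, ({x : Ordinal.{u} // x < β} → Bool)

/-- The height (level) of a node is its length. -/
def BNode.ht (s : BNode.{u}) : Ordinal.{u} := s.1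

/-- The restriction of a node to a smaller length. -/
def BNode.restrict (t : BNode.{u}) (β : Ordinal.{u}) (h : β ≤ t.1) : BNode.{u} :=
  ⟨β, fun x => t.2 ⟨x.1, lt_of_lt_of_le x.2 h⟩⟩

/-- Tree order on nodes: end extension. -/
def BNode.le (s t : BNode.{u}) : Prop :=
  s.1 ≤ t.1 ∧ ∀ x : {x : Ordinal.{u} // x < s.1}, ∀ hx : x.1 < t.1, s.2 x = t.2 ⟨x.1, hx⟩

/-- Strict tree order on nodes. -/
def BNode.slt (s t : BNode.{u}) : Prop := BNode.le s t ∧ s.1 < t.1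

/-- Replace the initial segment of `t` of length `s₁.1` by `s₁` ("swapping stems"). -/
noncomputable def BNode.swap (s₁ t : BNode.{u}) (h : s₁.1 ≤ t.1) : BNode.{u} :=
  ⟨t.1, fun x => if hx : x.1 < s₁.1 then s₁.2 ⟨x.1, hx⟩ else t.2 x⟩

/-- `C` is club in `κ`: unbounded in `κ` and closed under suprema below `κ`. -/
def IsClubIn (C : Set Ordinal.{u}) (κ : Ordinal.{u}) : Prop :=
  (∀ α < κ, ∃ β ∈ C, α < β ∧ β < κ) ∧
    ∀ α < κ, (0 : Ordinal.{u}) < α →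
      (∀ β < α, ∃ γ ∈ C, β < γ ∧ γ < α) → α ∈ C

/-- `S` is stationary in `κ`: it meets every club subset of `κ`. -/
def IsStationaryIn (S : Set Ordinal.{u}) (κ : Ordinal.{u}) : Prop :=
  ∀ C : Set Ordinal.{u}, IsClubIn C κ → ∃ x, x ∈ S ∧ x ∈ C ∧ x < κ

/-- `κ` is Mahlo: inaccessible, and the regular cardinals below `κ` are stationary. -/
def IsMahlo (κ : Cardinal.{u}) : Prop :=
  κ.IsInaccessible ∧
    IsStationaryIn {o : Ordinal.{u} | o.card.IsRegular ∧ o.card.ord = o} κ.ord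

/-- `κ` is 2-Mahlo: Mahlo, and the Mahlo cardinals below `κ` are stationary. -/
def Is2Mahlo (κ : Cardinal.{u}) : Prop :=
  IsMahlo κ ∧ IsStationaryIn {o : Ordinal.{u} | IsMahlo o.card ∧ o.card.ord = o} κ.ord

/-- A condition of Gitik's forcing `Q_{κ,δ}`: a normal homogeneous subtree of `2^{<κ}`
of successor height `top + 1 < κ`, together with a `δ`-ascent path `f` through it. -/
structure QCond (κ δ : Ordinal.{u}) : Type (u + 1) where
  /-- the top level of the tree; the tree has successor height `top + 1`. -/
  top : Ordinal.{u}
  top_lt : top + 1 < κ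
  /-- the tree. -/
  T : Set BNode.{u}
  mem_ht : ∀ t ∈ T, BNode.ht t < top + 1
  levels_nonempty : ∀ α < top + 1, ∃ t ∈ T, BNode.ht t = α
  downward_closed : ∀ t ∈ T, ∀ β : Ordinal.{u}, ∀ h : β ≤ BNode.ht t,
    BNode.restrict t β h ∈ T
  /-- normality: every node extends to every higher level below the height. -/
  normal : ∀ t ∈ T, ∀ α : Ordinal.{u}, BNode.ht t ≤ α → α < top + 1 →
    ∃ s ∈ T, BNode.ht s = α ∧ BNode.le t s
  /-- homogeneity: the cone above a node is invariant under swapping stems on a level. -/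
  homog : ∀ s₀ ∈ T, ∀ s₁ ∈ T, BNode.ht s₀ = BNode.ht s₁ →
    ∀ t ∈ T, BNode.le s₀ t → ∀ h : BNode.ht s₁ ≤ BNode.ht t, BNode.swap s₁ t h ∈ T
  /-- the `δ`-ascent path. -/
  f : Ordinal.{u} → Ordinal.{u} → BNode.{u}
  f_mem : ∀ α < top + 1, ∀ υ < δ, f α υ ∈ T ∧ BNode.ht (f α υ) = α
  f_ascent : ∀ α β : Ordinal.{u}, α < β → β < top + 1 →
    ∃ ξ < δ, ∀ υ : Ordinal.{u}, ξ ≤ υ → υ < δ → BNode.slt (f α υ) (f β υ)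

/-- The order on `Q_{κ,δ}`: end extension of the tree and of the ascent path. -/
def QLe {κ δ : Ordinal.{u}} (p q : QCond.{u} κ δ) : Prop :=
  q.top ≤ p.top ∧ q.T = {t ∈ p.T | BNode.ht t < q.top + 1} ∧
    ∀ α ≤ q.top, ∀ υ < δ, p.f α υ = q.f α υ

/-- A condition of the dense set `R₀` in `Q_{κ,δ} * Ḟ_{κ,δ}`: a condition `⟨t, f⃗⟩` of
`Q_{κ,δ}` together with `g = ⟨f_{ht(t)-1}, ξ⟩` for some `ξ < δ`, the `F`-part acting at
the top level of the tree. -/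
structure RCond (κ δ : Ordinal.{u}) extends QCond.{u} κ δ : Type (u + 1) where
  /-- the starting point of the `F_{κ,δ}`-condition. -/
  ξ : Ordinal.{u}
  ξ_lt : ξ < δ

/-- The order on `R₀`: extension in `Q_{κ,δ}`, equality of the `ξ`'s, and coordinatewise
tree-extension of the top functions above `ξ`. -/
def RLe {κ δ : Ordinal.{u}} (p q : RCond.{u} κ δ) : Prop :=
  QLe p.toQCond q.toQCond ∧ p.ξ = q.ξ ∧
    ∀ υ : Ordinal.{u}, p.ξ ≤ υ → υ < δ → BNode.le (q.f q.top υ) (p.f p.top υ)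


section Aux

/-- Extensionality for `BNode`s. -/
theorem BNode.eq_of_parts {s t : BNode.{u}} (h1 : s.1 = t.1)
    (h2 : ∀ x : {x : Ordinal.{u} // x < s.1}, ∀ hx : x.1 < t.1, s.2 x = t.2 ⟨x.1, hx⟩) :
    s = t := by
  obtain ⟨a, f⟩ := s
  obtain ⟨b, g⟩ := t
  dsimp at h1
  subst h1
  have : f = g := funext fun x => by simpa using h2 x x.2
  rw [this]

/-- Extend a node by zeros to length `β`. -/
noncomputable def BNode.extZ (t : BNode.{u}) (β : Ordinal.{u}) : BNode.{u} :=
  ⟨β, fun x => if hx : x.1 < t.1 then t.2 ⟨x.1, hx⟩ else false⟩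

theorem BNode.extZ_ht (t : BNode.{u}) (β : Ordinal.{u}) : (t.extZ β).ht = β := rfl

theorem BNode.le_extZ (t : BNode.{u}) {β : Ordinal.{u}} (h : t.1 ≤ β) :
    BNode.le t (t.extZ β) :=
  ⟨h, fun x _ => by
    show t.2 x = dite (x.1 < t.1) (fun hx => t.2 ⟨x.1, hx⟩) (fun _ => false)
    rw [dif_pos x.2]⟩

theorem BNode.extZ_le_extZ (t : BNode.{u}) {β γ : Ordinal.{u}} (h : β ≤ γ) :
    BNode.le (t.extZ β) (t.extZ γ) :=
  ⟨h, fun _ _ => rfl⟩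

theorem BNode.restrict_extZ (t : BNode.{u}) {β γ : Ordinal.{u}} (h : γ ≤ (t.extZ β).1) :
    BNode.restrict (t.extZ β) γ h = t.extZ γ := rfl

theorem BNode.extZ_eq_restrict (t : BNode.{u}) {γ : Ordinal.{u}} (h : γ ≤ t.1) :
    t.extZ γ = BNode.restrict t γ h :=
  BNode.eq_of_parts rfl fun x _ => dif_pos (lt_of_lt_of_le x.2 h)

theorem BNode.le_trans' {s t u : BNode.{u}} (h1 : BNode.le s t) (h2 : BNode.le t u) :
    BNode.le s u :=
  ⟨h1.1.trans h2.1, fun x hx =>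
    (h1.2 x (lt_of_lt_of_le x.2 h1.1)).trans (h2.2 ⟨x.1, lt_of_lt_of_le x.2 h1.1⟩ hx)⟩

theorem BNode.slt_of_slt_of_le {s t u : BNode.{u}} (h1 : BNode.slt s t) (h2 : BNode.le t u) :
    BNode.slt s u :=
  ⟨BNode.le_trans' h1.1 h2, lt_of_lt_of_le h1.2 h2.1⟩

theorem Ordinal.lt_add_one_iff' {a b : Ordinal.{u}} : a < b + 1 ↔ a ≤ b := by
  rw [Ordinal.add_one_eq_succ, Order.lt_succ_iff]

theorem Ordinal.lt_add_one' (a : Ordinal.{u}) : a < a + 1 :=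
  Ordinal.lt_add_one_iff'.2 le_rfl

end Aux

/-- For every condition `⟨t, f⃗⟩ ∈ Q_{κ,δ}` (`κ` 2-Mahlo, `δ < κ` regular) and every `α`
with `ht(t) ≤ α < κ`, there is an extension `⟨t', f⃗'⟩ ≤ ⟨t, f⃗⟩` with `ht(t') > α`;
i.e. the set of conditions of height `> α` is dense, so the generic tree `T(G)` has
height `κ`. -/
theorem QCond_tall_dense (κ δ : Cardinal.{u})
    (h2M : Is2Mahlo κ) (hδ : δ.IsRegular) (hδκ : δ < κ) :
    ∀ p : QCond.{u} κ.ord δ.ord, ∀ α : Ordinal.{u}, p.top + 1 ≤ α → α < κ.ord →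
      ∃ q : QCond.{u} κ.ord δ.ord, QLe q p ∧ α < q.top + 1 := by
  intro p α hα1 hα2
  classical
  have hptop : p.top < α := lt_of_lt_of_le (Ordinal.lt_add_one' p.top) hα1
  have htople : p.top ≤ α := le_of_lt hptop
  have hδ0 : (0 : Ordinal.{u}) < δ.ord := by
    rw [← Cardinal.ord_zero, Cardinal.ord_lt_ord]
    exact lt_of_lt_of_le Cardinal.aleph0_pos hδ.aleph0_le
  have hptoplt : p.top < p.top + 1 := Ordinal.lt_add_one' p.top
  -- the extended tree
  set T' : Set BNode.{u} :=
    {s | s ∈ p.T ∨ ∃ β' : Ordinal.{u}, ∃ t : BNode.{u}, t ∈ p.T ∧ t.1 = p.top ∧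
      p.top < β' ∧ β' ≤ α ∧ s = BNode.extZ t β'} with hT'def
  have mem_low : ∀ s ∈ T', BNode.ht s ≤ p.top → s ∈ p.T := by
    rintro s (hs | ⟨β', t, _, _, h1, _, rfl⟩) hle
    · exact hs
    · exact absurd hle (not_le.2 h1)
  have mem_ht' : ∀ t ∈ T', BNode.ht t < α + 1 := by
    rintro t (ht | ⟨β', t₀, _, _, _, h2, rfl⟩)
    · exact lt_of_lt_of_le (p.mem_ht t ht) (le_trans hα1 (le_of_lt (Ordinal.lt_add_one' α)))
    · exact Ordinal.lt_add_one_iff'.2 h2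
  refine ⟨{ top := α
            top_lt := ?_
            T := T'
            mem_ht := mem_ht'
            levels_nonempty := ?_
            downward_closed := ?_
            normal := ?_
            homog := ?_
            f := fun β υ => if β ≤ p.top then p.f β υ else BNode.extZ (p.f p.top υ) β
            f_mem := ?_
            f_ascent := ?_ }, ⟨htople, ?_, ?_⟩, Ordinal.lt_add_one' α⟩
  · -- top_lt
    rw [Ordinal.add_one_eq_succ]
    exact (Cardinal.isSuccLimit_ord h2M.1.1.1.le).succ_lt hα2
  · -- levels_nonempty
    intro β hβ
    by_cases hb : β ≤ p.top
    · obtain ⟨t, ht, hht⟩ := p.levels_nonempty β (Ordinal.lt_add_one_iff'.2 hb)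
      exact ⟨t, Or.inl ht, hht⟩
    · obtain ⟨t, ht, hht⟩ := p.levels_nonempty p.top hptoplt
      exact ⟨BNode.extZ t β, Or.inr ⟨β, t, ht, hht, not_le.1 hb,
        Ordinal.lt_add_one_iff'.1 hβ, rfl⟩, rfl⟩
  · -- downward_closed
    rintro t (ht | ⟨β', t₀, ht₀, hht₀, h1, h2, rfl⟩) β hβ
    · exact Or.inl (p.downward_closed t ht β hβ)
    · change BNode.extZ t₀ β ∈ T'
      by_cases hb : β ≤ p.top
      · have hb' : β ≤ t₀.1 := by rw [hht₀]; exact hb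
        rw [BNode.extZ_eq_restrict t₀ hb']
        exact Or.inl (p.downward_closed t₀ ht₀ β hb')
      · exact Or.inr ⟨β, t₀, ht₀, hht₀, not_le.1 hb, le_trans hβ h2, rfl⟩
  · -- normal
    rintro t (ht | ⟨β', t₀, ht₀, hht₀, h1, h2, rfl⟩) γ hγ1 hγ2
    · by_cases hg : γ ≤ p.top
      · obtain ⟨s, hs, hhs, hts⟩ := p.normal t ht γ hγ1 (Ordinal.lt_add_one_iff'.2 hg)
        exact ⟨s, Or.inl hs, hhs, hts⟩
      · have htle : BNode.ht t ≤ p.top := Ordinal.lt_add_one_iff'.1 (p.mem_ht t ht)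
        obtain ⟨s, hs, hhs, hts⟩ := p.normal t ht p.top htle hptoplt
        refine ⟨BNode.extZ s γ, Or.inr ⟨γ, s, hs, hhs, not_le.1 hg,
          Ordinal.lt_add_one_iff'.1 hγ2, rfl⟩, rfl, ?_⟩
        exact BNode.le_trans' hts (BNode.le_extZ s
          (show s.1 ≤ γ by rw [show s.1 = p.top from hhs]; exact le_of_lt (not_le.1 hg)))
    · refine ⟨BNode.extZ t₀ γ, Or.inr ⟨γ, t₀, ht₀, hht₀, lt_of_lt_of_le h1 hγ1,
        Ordinal.lt_add_one_iff'.1 hγ2, rfl⟩, rfl, BNode.extZ_le_extZ t₀ hγ1⟩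
  · -- homog
    rintro s₀ hs₀ s₁ hs₁ hh t' (ht' | ⟨β', t₀, ht₀, hht₀, h1, h2, rfl⟩) hle h
    · -- t' in the old tree
      have hs₀le : BNode.ht s₀ ≤ p.top :=
        le_trans hle.1 (Ordinal.lt_add_one_iff'.1 (p.mem_ht t' ht'))
      exact Or.inl (p.homog s₀ (mem_low s₀ hs₀ hs₀le) s₁
        (mem_low s₁ hs₁ (hh.symm.trans_le hs₀le)) hh t' ht' hle h)
    · -- t' = extZ t₀ β'
      by_cases hsp : BNode.ht s₁ ≤ p.top
      · -- low-level swap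
        have hs₀p : s₀ ∈ p.T := mem_low s₀ hs₀ (hh.trans_le hsp)
        have hs₁p : s₁ ∈ p.T := mem_low s₁ hs₁ hsp
        have h' : BNode.ht s₁ ≤ BNode.ht t₀ := by
          show s₁.1 ≤ t₀.1; rw [hht₀]; exact hsp
        have hs₀t₀ : BNode.le s₀ t₀ := by
          refine ⟨show s₀.1 ≤ t₀.1 by rw [hht₀]; exact hh.trans_le hsp, fun x hx => ?_⟩
          have hx' : x.1 < β' := lt_of_lt_of_le hx (le_of_lt (hht₀ ▸ h1))
          have := hle.2 x hx'
          rw [this]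
          show dite (x.1 < t₀.1) (fun hy => t₀.2 ⟨x.1, hy⟩) (fun _ => false) = _
          rw [dif_pos hx]
        have hu : BNode.swap s₁ t₀ h' ∈ p.T := p.homog s₀ hs₀p s₁ hs₁p hh t₀ ht₀ hs₀t₀ h'
        have hequ : BNode.swap s₁ (BNode.extZ t₀ β') h =
            BNode.extZ (BNode.swap s₁ t₀ h') β' := by
          refine BNode.eq_of_parts rfl fun x hx => ?_
          show (if hy : x.1 < s₁.1 then s₁.2 ⟨x.1, hy⟩
              else if hz : x.1 < t₀.1 then t₀.2 ⟨x.1, hz⟩ else false) =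
            if hy : x.1 < t₀.1
              then (if hz : x.1 < s₁.1 then s₁.2 ⟨x.1, hz⟩ else t₀.2 ⟨x.1, hy⟩) else false
          by_cases hy : x.1 < s₁.1
          · have hyt : x.1 < t₀.1 := lt_of_lt_of_le hy h'
            rw [dif_pos hy, dif_pos hyt, dif_pos hy]
          · rw [dif_neg hy]
            by_cases hz : x.1 < t₀.1
            · rw [dif_pos hz, dif_pos hz, dif_neg hy]
            · rw [dif_neg hz, dif_neg hz]
        rw [hequ]
        exact Or.inr ⟨β', BNode.swap s₁ t₀ h', hu, hht₀, h1, h2, rfl⟩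
      · -- s₁ is itself an extension node
        rcases hs₁ with hs₁p | ⟨γ', s₁', hs₁', hhs₁', hg1, hg2, rfl⟩
        · exact absurd (Ordinal.lt_add_one_iff'.1 (p.mem_ht s₁ hs₁p)) hsp
        · have hequ : BNode.swap (BNode.extZ s₁' γ') (BNode.extZ t₀ β') h =
              BNode.extZ s₁' β' := by
            refine BNode.eq_of_parts rfl fun x hx => ?_
            show (if hy : x.1 < γ'
                then (if hz : x.1 < s₁'.1 then s₁'.2 ⟨x.1, hz⟩ else false)
                else if hz : x.1 < t₀.1 then t₀.2 ⟨x.1, hz⟩ else false) =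
              if hz : x.1 < s₁'.1 then s₁'.2 ⟨x.1, hz⟩ else false
            by_cases hy : x.1 < γ'
            · rw [dif_pos hy]
            · rw [dif_neg hy]
              have hxt : ¬ x.1 < t₀.1 := by
                rw [hht₀]; exact fun hc => hy (lt_trans hc hg1)
              have hxs : ¬ x.1 < s₁'.1 := by
                rw [hhs₁']; exact fun hc => hy (lt_trans hc hg1)
              rw [dif_neg hxt, dif_neg hxs]
          rw [hequ]
          exact Or.inr ⟨β', s₁', hs₁', hhs₁', h1, h2, rfl⟩
  · -- f_mem
    intro β hβ υ hυ
    by_cases hb : β ≤ p.top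
    · obtain ⟨hm, hh⟩ := p.f_mem β (Ordinal.lt_add_one_iff'.2 hb) υ hυ
      refine ⟨?_, ?_⟩ <;> simp only [if_pos hb]
      · exact Or.inl hm
      · exact hh
    · obtain ⟨hm, hh⟩ := p.f_mem p.top hptoplt υ hυ
      refine ⟨?_, ?_⟩ <;> simp only [if_neg hb]
      · exact Or.inr ⟨β, p.f p.top υ, hm, hh, not_le.1 hb, Ordinal.lt_add_one_iff'.1 hβ, rfl⟩
      · rfl
  · -- f_ascent
    intro β₁ β₂ hlt hβ₂
    by_cases h2 : β₂ ≤ p.top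
    · have h1 : β₁ ≤ p.top := le_of_lt (lt_of_lt_of_le hlt h2)
      obtain ⟨ξ, hξ, hall⟩ := p.f_ascent β₁ β₂ hlt (Ordinal.lt_add_one_iff'.2 h2)
      refine ⟨ξ, hξ, fun υ hυ1 hυ2 => ?_⟩
      simp only [if_pos h1, if_pos h2]
      exact hall υ hυ1 hυ2
    · by_cases h1 : β₁ < p.top
      · obtain ⟨ξ, hξ, hall⟩ := p.f_ascent β₁ p.top h1 hptoplt
        refine ⟨ξ, hξ, fun υ hυ1 hυ2 => ?_⟩
        simp only [if_pos (le_of_lt h1), if_neg h2]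
        refine BNode.slt_of_slt_of_le (hall υ hυ1 hυ2) (BNode.le_extZ _ ?_)
        show BNode.ht (p.f p.top υ) ≤ β₂
        rw [(p.f_mem p.top hptoplt υ hυ2).2]
        exact le_of_lt (not_le.1 h2)
      · refine ⟨0, hδ0, fun υ _ hυ2 => ?_⟩
        by_cases hb1 : β₁ ≤ p.top
        · have hβ₁ : β₁ = p.top := le_antisymm hb1 (not_lt.1 h1)
          subst hβ₁
          simp only [if_pos le_rfl, if_neg h2]
          have hh := (p.f_mem p.top hptoplt υ hυ2).2
          refine ⟨BNode.le_extZ _ ?_, ?_⟩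
          · show BNode.ht (p.f p.top υ) ≤ β₂
            rw [hh]; exact le_of_lt (not_le.1 h2)
          · show BNode.ht (p.f p.top υ) < β₂
            rw [hh]; exact not_le.1 h2
        · simp only [if_neg hb1, if_neg h2]
          exact ⟨BNode.extZ_le_extZ _ (le_of_lt hlt), hlt⟩
  · -- p.T is the restriction of the new tree
    ext t
    constructor
    · intro ht
      exact ⟨Or.inl ht, p.mem_ht t ht⟩
    · rintro ⟨(ht | ⟨β', t₀, ht₀, hht₀, hg1, hg2, rfl⟩), hht⟩
      · exact ht
      · exact absurd (Ordinal.lt_add_one_iff'.1 hht) (not_le.2 hg1)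
  · -- the ascent paths agree up to p.top
    intro β hβ υ hυ
    simp only [if_pos hβ]
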